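/- Suppose w ∈ Ŵ is dominant and let c be the first-layer ideal of w, i.e. the ad-nilpotent ideal with I_c = {γ ∈ Δ⁺ : w(δ−γ) ∈ −Δ̂⁺}. If ν ∈ Π and w(ν) ∈ Π̂, then g_{−ν} ⊆ n_g(c). -/

import Mathlib

open scoped RealInnerProductSpace
open scoped Classical

set_option linter.unusedSectionVars false

noncomputable section

/-- Axiomatization of the root system (with a fixed base and positive system) of a
complex simple Lie algebra `g` with Cartan subalgebra `t ⊆ b`: a finite, reduced,
crystallographic root system, invariant under its reflections, in a euclidean vector
space `V` (the real span of the roots, with a Weyl-group-invariant inner product),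
together with the set `Pi` of simple roots and the set `Δpos` of positive roots. -/
structure RootSystemData (V : Type*) [NormedAddCommGroup V] [InnerProductSpace ℝ V]
    [FiniteDimensional ℝ V] where
  /-- the set of all roots -/
  Δ : Finset V
  /-- the set of simple roots -/
  Pi : Finset V
  /-- the set of positive roots -/
  Δpos : Finset V
  zero_not_mem : (0 : V) ∉ Δ
  neg_mem : ∀ ⦃α⦄, α ∈ Δ → -α ∈ Δ
  reflect_mem : ∀ ⦃α⦄, α ∈ Δ → ∀ ⦃β⦄, β ∈ Δ → β - (2 * ⟪β, α⟫ / ⟪α, α⟫) • α ∈ Δ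
  crystallographic : ∀ ⦃α⦄, α ∈ Δ → ∀ ⦃β⦄, β ∈ Δ → ∃ n : ℤ, 2 * ⟪β, α⟫ = n * ⟪α, α⟫
  reduced : ∀ ⦃α⦄, α ∈ Δ → ∀ t : ℝ, t • α ∈ Δ → t = 1 ∨ t = -1
  Pi_subset : Pi ⊆ Δpos
  Pi_indep : LinearIndependent ℝ (Subtype.val : {x : V // x ∈ Pi} → V)
  Pi_span : Submodule.span ℝ (Pi : Set V) = ⊤
  Δpos_subset : Δpos ⊆ Δ
  mem_Δpos_iff : ∀ ⦃γ⦄, γ ∈ Δ →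
    (γ ∈ Δpos ↔ ∃ c : V → ℕ, γ = ∑ α ∈ Pi, (c α : ℝ) • α)
  pos_or_neg : ∀ ⦃γ⦄, γ ∈ Δ → γ ∈ Δpos ∨ -γ ∈ Δpos

variable {V : Type*} [NormedAddCommGroup V] [InnerProductSpace ℝ V] [FiniteDimensional ℝ V]

/-- `θ` is the highest root: `θ ∈ Δ⁺` and `γ ≼ θ` for every positive root `γ`. -/
def RootSystemData.IsHighestRoot (R : RootSystemData V) (θ : V) : Prop :=
  θ ∈ R.Δpos ∧ ∀ γ ∈ R.Δpos, ∃ c : V → ℕ, θ - γ = ∑ α ∈ R.Pi, (c α : ℝ) • α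

/-- An upper ideal of the root poset `(Δ⁺, ≼)`: a subset `I ⊆ Δ⁺` such that if
`γ ∈ I`, `μ ∈ Δ⁺` and `γ + μ` is a root, then `γ + μ ∈ I`.  Upper ideals correspond
bijectively to the ad-nilpotent ideals `c = ⊕_{γ ∈ I} g_γ` of the Borel subalgebra
`b` (the ideals of `b` contained in `u = [b, b]`). -/
def RootSystemData.IsUpperIdeal (R : RootSystemData V) (I : Finset V) : Prop :=
  I ⊆ R.Δpos ∧ ∀ γ ∈ I, ∀ μ ∈ R.Δpos, γ + μ ∈ R.Δ → γ + μ ∈ I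

/-- The weight `|c| = Σ_{γ ∈ I_c} γ` of an ad-nilpotent ideal. -/
def idealWeight {V : Type*} [NormedAddCommGroup V] [InnerProductSpace ℝ V]
    [FiniteDimensional ℝ V] (I : Finset V) : V := ∑ γ ∈ I, γ

/-- The condition `g_{-α} ⊆ n_g(c)` for a simple root `α` and the ad-nilpotent ideal
`c = ⊕_{γ ∈ I} g_γ`.  Since `[g_{-α}, g_γ] = g_{γ-α}` when `γ - α` is a root,
`[g_{-α}, g_α] ⊆ t` and `[g_{-α}, g_γ] = 0` otherwise (and `γ - α ∈ Δ` with
`γ ∈ Δ⁺`, `α` simple forces `γ - α ∈ Δ⁺`), the root space `g_{-α}` normalizes `c`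
if and only if `α ∉ I` and `I` is closed under subtracting `α` inside `Δ`.
(The normalizer `n_g(c)` is the standard parabolic subalgebra generated by `b` and
those `g_{-α}`, `α ∈ Π`, satisfying this condition.) -/
def RootSystemData.NegSimpleRootInNormalizer (R : RootSystemData V) (I : Finset V)
    (α : V) : Prop :=
  α ∉ I ∧ ∀ γ ∈ I, γ - α ∈ R.Δ → γ - α ∈ I

/-- The extended space `V̂ = V ⊕ ℝδ ⊕ ℝλ`, with `δ = (0,1,0)` and `λ = (0,0,1)`. -/
abbrev AffSpace (V : Type*) := V × ℝ × ℝ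

/-- The extension of the inner product to `V̂`:
`(δ,V) = (λ,V) = (δ,δ) = (λ,λ) = 0` and `(δ,λ) = 1`. -/
def affForm (x y : AffSpace V) : ℝ := ⟪x.1, y.1⟫ + x.2.1 * y.2.2 + x.2.2 * y.2.1

/-- The basic imaginary root `δ`. -/
def affDelta (V : Type*) [NormedAddCommGroup V] [InnerProductSpace ℝ V] : AffSpace V :=
  (0, 1, 0)

/-- The element `λ`, with `(δ, λ) = 1`. -/
def affLambda (V : Type*) [NormedAddCommGroup V] [InnerProductSpace ℝ V] : AffSpace V :=
  (0, 0, 1)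

/-- The canonical embedding `V → V̂`. -/
def affIota (v : V) : AffSpace V := (v, 0, 0)

lemma affForm_add_left (x y z : AffSpace V) :
    affForm (x + y) z = affForm x z + affForm y z := by
  simp [affForm, inner_add_left]; ring

lemma affForm_smul_left (a : ℝ) (x z : AffSpace V) :
    affForm (a • x) z = a * affForm x z := by
  simp [affForm, real_inner_smul_left]; ring

/-- The reflection of `V̂` in (the hyperplane orthogonal to) `β`, as a linear map:
`x ↦ x - (x, β∨) β`. -/
def affReflectMap (β : AffSpace V) : AffSpace V →ₗ[ℝ] AffSpace V where
  toFun x := x - (2 * affForm x β / affForm β β) • β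
  map_add' x y := by
    rw [affForm_add_left, mul_add, add_div, add_smul]
    abel
  map_smul' a x := by
    dsimp only [RingHom.id_apply]
    rw [affForm_smul_left, smul_sub, smul_smul]
    congr 2
    ring

lemma affReflectMap_involutive (β : AffSpace V) :
    Function.Involutive (affReflectMap (V := V) β) := by
  intro x
  show (affReflectMap β) ((affReflectMap β) x) = x
  simp only [affReflectMap, LinearMap.coe_mk, AddHom.coe_mk]
  set c := affForm β β with hc0
  set t := 2 * affForm x β / c with ht
  have hF : affForm (x - t • β) β = affForm x β - t * c := by
    have h1 : x - t • β = x + (-t) • β := by rw [neg_smul]; abel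
    rw [h1, affForm_add_left, affForm_smul_left]; ring
  have key : 2 * affForm (x - t • β) β / c = -t := by
    rw [hF, ht]
    by_cases hc : c = 0
    · simp [hc]
    · field_simp
      ring
  rw [key, neg_smul]
  abel

/-- The reflection of `V̂` in `β`, as a linear automorphism. -/
def affReflect (β : AffSpace V) : AffSpace V ≃ₗ[ℝ] AffSpace V :=
  LinearEquiv.ofLinear (affReflectMap β) (affReflectMap β)
    (LinearMap.ext fun x => affReflectMap_involutive β x)
    (LinearMap.ext fun x => affReflectMap_involutive β x)

/-- The set `Π̂ = Π ∪ {α₀}` of affine simple roots, where `α₀ = δ - θ`. -/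
def affSimpleRoots (R : RootSystemData V) (θ : V) : Set (AffSpace V) :=
  (fun α => affIota α) '' (R.Pi : Set V) ∪ {affDelta V - affIota θ}

/-- The set `Δ̂⁺ = Δ⁺ ∪ {μ + kδ : μ ∈ Δ, k ≥ 1}` of positive affine roots. -/
def affPosRoots (R : RootSystemData V) : Set (AffSpace V) :=
  (fun μ => affIota μ) '' (R.Δpos : Set V) ∪
    {x | ∃ μ ∈ R.Δ, ∃ k : ℕ, 1 ≤ k ∧ x = affIota μ + (k : ℝ) • affDelta V}

/-- The affine Weyl group `Ŵ`, realized through its linear action on `V̂`: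
the subgroup of `GL(V̂)` generated by the reflections in the affine simple roots. -/
def affWeylGroup (R : RootSystemData V) (θ : V) :
    Subgroup (AffSpace V ≃ₗ[ℝ] AffSpace V) :=
  Subgroup.closure (affReflect '' affSimpleRoots R θ)

/-- `N(w) = {μ ∈ Δ̂⁺ : w(μ) ∈ -Δ̂⁺}`. -/
def affInversionSet (R : RootSystemData V) (w : AffSpace V ≃ₗ[ℝ] AffSpace V) :
    Set (AffSpace V) :=
  {x | x ∈ affPosRoots R ∧ -(w x) ∈ affPosRoots R}

/-- `|N(w)| = Σ_{μ ∈ N(w)} μ` (a finite sum whenever `w ∈ Ŵ`). -/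
def affInversionSum (R : RootSystemData V) (w : AffSpace V ≃ₗ[ℝ] AffSpace V) :
    AffSpace V :=
  ∑ᶠ x ∈ affInversionSet R w, x

/-- `w ∈ Ŵ` is dominant if `w(α) ∈ Δ̂⁺` for every `α ∈ Π`. -/
def IsDominant (R : RootSystemData V) (w : AffSpace V ≃ₗ[ℝ] AffSpace V) : Prop :=
  ∀ α ∈ R.Pi, w (affIota α) ∈ affPosRoots R


namespace AuxStmt8

variable {V : Type*} [NormedAddCommGroup V] [InnerProductSpace ℝ V] [FiniteDimensional ℝ V]

@[simp] lemma affIota_fst (v : V) : (affIota v).1 = v := rfl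
@[simp] lemma affIota_snd1 (v : V) : (affIota v).2.1 = 0 := rfl
@[simp] lemma affIota_snd2 (v : V) : (affIota v).2.2 = 0 := rfl
@[simp] lemma affDelta_fst : (affDelta V).1 = 0 := rfl
@[simp] lemma affDelta_snd1 : (affDelta V).2.1 = 1 := rfl
@[simp] lemma affDelta_snd2 : (affDelta V).2.2 = 0 := rfl

lemma affIota_sub (a b : V) : affIota (a - b) = affIota a - affIota b := by
  simp [affIota, Prod.ext_iff]

lemma affReflect_apply (β x : AffSpace V) :
    affReflect β x = x - (2 * affForm x β / affForm β β) • β := rfl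

/-- nonnegative ℕ-combination of simple roots -/
def IsNN (R : RootSystemData V) (γ : V) : Prop :=
  ∃ c : V → ℕ, γ = ∑ α ∈ R.Pi, (c α : ℝ) • α

lemma coeff_eq_zero (R : RootSystemData V) {f : V → ℝ}
    (h : ∑ α ∈ R.Pi, f α • α = 0) : ∀ α ∈ R.Pi, f α = 0 := by
  have h' : ∑ i ∈ R.Pi.attach, f i.val • (i.val : V) = 0 := by
    rw [Finset.sum_attach R.Pi (fun α => f α • α)]; exact h
  have hli := linearIndependent_iff'.mp R.Pi_indep R.Pi.attach (fun i => f i.val) h'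
  intro α hα
  exact hli ⟨α, hα⟩ (Finset.mem_attach _ _)

lemma isNN_of_pos (R : RootSystemData V) {γ : V} (h : γ ∈ R.Δpos) : IsNN R γ :=
  (R.mem_Δpos_iff (R.Δpos_subset h)).1 h

lemma isNN_add (R : RootSystemData V) {γ μ : V} (h : IsNN R γ) (h' : IsNN R μ) :
    IsNN R (γ + μ) := by
  obtain ⟨c, rfl⟩ := h
  obtain ⟨d, rfl⟩ := h'
  exact ⟨fun α => c α + d α, by
    rw [← Finset.sum_add_distrib]
    refine Finset.sum_congr rfl fun α _ => ?_
    push_cast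
    rw [add_smul]⟩

lemma eq_zero_of_NN_add_NN (R : RootSystemData V) {γ μ : V}
    (h : IsNN R γ) (h' : IsNN R μ) (hsum : γ + μ = 0) : γ = 0 := by
  obtain ⟨c, hc⟩ := h
  obtain ⟨d, hd⟩ := h'
  have h0 : ∑ α ∈ R.Pi, ((c α : ℝ) + d α) • α = 0 := by
    simp only [add_smul, Finset.sum_add_distrib, ← hc, ← hd]
    exact hsum
  have key := coeff_eq_zero R h0
  rw [hc]
  refine Finset.sum_eq_zero fun α hα => ?_
  have h1 := key α hα
  have h2 : (0:ℝ) ≤ (c α : ℝ) := Nat.cast_nonneg _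
  have h3 : (0:ℝ) ≤ (d α : ℝ) := Nat.cast_nonneg _
  have : (c α : ℝ) = 0 := by linarith
  rw [this, zero_smul]

lemma NN_add_NN_eq_simple (R : RootSystemData V) {γ μ ν : V} (hν : ν ∈ R.Pi)
    (h : IsNN R γ) (h' : IsNN R μ) (hsum : γ + μ = ν) : γ = 0 ∨ μ = 0 := by
  obtain ⟨c, hc⟩ := h
  obtain ⟨d, hd⟩ := h'
  have hνsum : ∑ α ∈ R.Pi, (if α = ν then (1:ℝ) else 0) • α = ν := by
    have hcongr : ∀ α ∈ R.Pi, (if α = ν then (1:ℝ) else 0) • α = if α = ν then ν else 0 := by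
      intro α _
      split_ifs with hh
      · rw [hh, one_smul]
      · rw [zero_smul]
    rw [Finset.sum_congr rfl hcongr, Finset.sum_ite_eq' R.Pi ν (fun _ => ν), if_pos hν]
  have h0 : ∑ α ∈ R.Pi, ((c α : ℝ) + d α - if α = ν then (1:ℝ) else 0) • α = 0 := by
    simp only [sub_smul, add_smul, Finset.sum_sub_distrib, Finset.sum_add_distrib,
      hνsum, ← hc, ← hd]
    rw [hsum, sub_self]
  have key := coeff_eq_zero R h0
  have hval : ∀ α ∈ R.Pi, (c α : ℝ) + d α = if α = ν then (1:ℝ) else 0 := by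
    intro α hα
    have := key α hα
    linarith [this]
  have hν1 : c ν + d ν = 1 := by
    have := hval ν hν
    rw [if_pos rfl] at this
    exact_mod_cast this
  have hother : ∀ α ∈ R.Pi, α ≠ ν → c α = 0 ∧ d α = 0 := by
    intro α hα hne
    have h1 := hval α hα
    rw [if_neg hne] at h1
    have h2 : (0:ℝ) ≤ (c α : ℝ) := Nat.cast_nonneg _
    have h3 : (0:ℝ) ≤ (d α : ℝ) := Nat.cast_nonneg _
    constructor
    · exact_mod_cast (by linarith : (c α : ℝ) = 0)
    · exact_mod_cast (by linarith : (d α : ℝ) = 0)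
  rcases Nat.le_one_iff_eq_zero_or_eq_one.mp (by omega : c ν ≤ 1) with h1 | h1
  · left
    rw [hc]
    refine Finset.sum_eq_zero fun α hα => ?_
    by_cases hne : α = ν
    · rw [hne, h1]; simp
    · rw [(hother α hα hne).1]; simp
  · right
    have hd0 : d ν = 0 := by omega
    rw [hd]
    refine Finset.sum_eq_zero fun α hα => ?_
    by_cases hne : α = ν
    · rw [hne, hd0]; simp
    · rw [(hother α hα hne).2]; simp

lemma mem_affPosRoots_iff (R : RootSystemData V) (x : AffSpace V) :
    x ∈ affPosRoots R ↔ (∃ μ ∈ R.Δpos, x = affIota μ) ∨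
      ∃ μ ∈ R.Δ, ∃ k : ℕ, 1 ≤ k ∧ x = affIota μ + (k : ℝ) • affDelta V := by
  constructor
  · rintro (⟨μ, hμ, rfl⟩ | h)
    · exact Or.inl ⟨μ, hμ, rfl⟩
    · exact Or.inr h
  · rintro (⟨μ, hμ, rfl⟩ | h)
    · exact Or.inl ⟨μ, hμ, rfl⟩
    · exact Or.inr h

lemma snd1_of_affPosRoot (R : RootSystemData V) {x : AffSpace V}
    (hx : x ∈ affPosRoots R) : x.2.1 = 0 ∨ ∃ k : ℕ, 1 ≤ k ∧ x.2.1 = (k : ℝ) := by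
  rcases (mem_affPosRoots_iff R x).1 hx with ⟨μ, _, rfl⟩ | ⟨μ, _, k, hk, rfl⟩
  · left; simp
  · right; exact ⟨k, hk, by simp⟩

lemma not_both_pos (R : RootSystemData V) {x : AffSpace V}
    (hx : x ∈ affPosRoots R) (hnx : -x ∈ affPosRoots R) : False := by
  rcases (mem_affPosRoots_iff R x).1 hx with ⟨μ, hμ, rfl⟩ | ⟨μ, hμ, k, hk, rfl⟩
  · rcases (mem_affPosRoots_iff R _).1 hnx with ⟨μ', hμ', he⟩ | ⟨μ', hμ', k', hk', he⟩
    · have hfst : -μ = μ' := by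
        have := congrArg Prod.fst he
        simpa using this
      have h0 : μ = 0 := eq_zero_of_NN_add_NN R (isNN_of_pos R hμ) (isNN_of_pos R hμ')
        (by rw [← hfst]; abel)
      exact R.zero_not_mem (h0 ▸ R.Δpos_subset hμ)
    · have := congrArg (fun z : AffSpace V => z.2.1) he
      simp [affIota, affDelta] at this
      have hz : k' = 0 := by exact_mod_cast this.symm
      omega
  · rcases (mem_affPosRoots_iff R _).1 hnx with ⟨μ', hμ', he⟩ | ⟨μ', hμ', k', hk', he⟩
    · have := congrArg (fun z : AffSpace V => z.2.1) he
      simp [affIota, affDelta] at this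
      omega
    · have := congrArg (fun z : AffSpace V => z.2.1) he
      simp [affIota, affDelta] at this
      have h1 : (1:ℝ) ≤ (k:ℝ) := by exact_mod_cast hk
      have h2 : (1:ℝ) ≤ (k':ℝ) := by exact_mod_cast hk'
      linarith

lemma no_sum_simple_iota (R : RootSystemData V) {β : V} {p q : AffSpace V} (hβ : β ∈ R.Pi)
    (hp : p ∈ affPosRoots R) (hq : q ∈ affPosRoots R) (h : p + q = affIota β) : False := by
  rcases (mem_affPosRoots_iff R p).1 hp with ⟨μ₁, h1, rfl⟩ | ⟨μ₁, h1, k1, hk1, rfl⟩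
  · rcases (mem_affPosRoots_iff R q).1 hq with ⟨μ₂, h2, rfl⟩ | ⟨μ₂, h2, k2, hk2, rfl⟩
    · have hfst : μ₁ + μ₂ = β := by
        have := congrArg Prod.fst h
        simpa using this
      rcases NN_add_NN_eq_simple R hβ (isNN_of_pos R h1) (isNN_of_pos R h2) hfst with h0 | h0
      · exact R.zero_not_mem (h0 ▸ R.Δpos_subset h1)
      · exact R.zero_not_mem (h0 ▸ R.Δpos_subset h2)
    · have hsnd : (0:ℝ) + (k2:ℝ) = 0 := by
        have := congrArg (fun z : AffSpace V => z.2.1) h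
        simpa [affIota, affDelta] using this
      have : k2 = 0 := by exact_mod_cast (by linarith : (k2:ℝ) = 0)
      omega
  · have hsnd : (k1:ℝ) + q.2.1 = 0 := by
      have := congrArg (fun z : AffSpace V => z.2.1) h
      simpa [affIota, affDelta] using this
    rcases snd1_of_affPosRoot R hq with h0 | ⟨k', hk', h0⟩
    · rw [h0, add_zero] at hsnd
      have : k1 = 0 := by exact_mod_cast hsnd
      omega
    · rw [h0] at hsnd
      have ha : (1:ℝ) ≤ (k1:ℝ) := by exact_mod_cast hk1
      have hb : (1:ℝ) ≤ (k':ℝ) := by exact_mod_cast hk'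
      linarith

lemma core_neg_theta (R : RootSystemData V) {θ μ₁ μ₂ : V} (hθ : R.IsHighestRoot θ)
    (h1 : μ₁ ∈ R.Δpos) (h2 : μ₂ ∈ R.Δ) (hs : μ₁ + μ₂ = -θ) : False := by
  rcases R.pos_or_neg h2 with hc | hc
  · have h0 : θ = 0 := eq_zero_of_NN_add_NN R
      ⟨_, ((R.mem_Δpos_iff (R.Δpos_subset hθ.1)).1 hθ.1).choose_spec⟩
      (isNN_add R (isNN_of_pos R h1) (isNN_of_pos R hc))
      (by rw [hs]; abel)
    exact R.zero_not_mem (h0 ▸ R.Δpos_subset hθ.1)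
  · obtain ⟨c, hc2⟩ := hθ.2 _ hc
    have hNN : IsNN R (θ + μ₂) := ⟨c, by rw [← hc2]; abel⟩
    have h0 : μ₁ = 0 := eq_zero_of_NN_add_NN R (isNN_of_pos R h1) hNN
      (by rw [← add_assoc]; rw [show μ₁ + θ + μ₂ = (μ₁ + μ₂) + θ by abel, hs]; abel)
    exact R.zero_not_mem (h0 ▸ R.Δpos_subset h1)

lemma no_sum_alpha0 (R : RootSystemData V) {θ : V} (hθ : R.IsHighestRoot θ)
    {p q : AffSpace V} (hp : p ∈ affPosRoots R) (hq : q ∈ affPosRoots R)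
    (h : p + q = affDelta V - affIota θ) : False := by
  rcases (mem_affPosRoots_iff R p).1 hp with ⟨μ₁, h1, rfl⟩ | ⟨μ₁, h1, k1, hk1, rfl⟩
  · rcases (mem_affPosRoots_iff R q).1 hq with ⟨μ₂, h2, rfl⟩ | ⟨μ₂, h2, k2, hk2, rfl⟩
    · have hsnd := congrArg (fun z : AffSpace V => z.2.1) h
      simp [affIota, affDelta] at hsnd
    · have hfst : μ₁ + μ₂ = -θ := by
        have := congrArg Prod.fst h
        simp [affIota, affDelta] at this
        exact this
      exact core_neg_theta R hθ h1 h2 hfst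
  · rcases (mem_affPosRoots_iff R q).1 hq with ⟨μ₂, h2, rfl⟩ | ⟨μ₂, h2, k2, hk2, rfl⟩
    · have hfst : μ₂ + μ₁ = -θ := by
        have := congrArg Prod.fst h
        simp [affIota, affDelta] at this
        rw [add_comm]
        exact this
      exact core_neg_theta R hθ h2 h1 hfst
    · have hsnd := congrArg (fun z : AffSpace V => z.2.1) h
      simp [affIota, affDelta] at hsnd
      have ha : (1:ℝ) ≤ (k1:ℝ) := by exact_mod_cast hk1
      have hb : (1:ℝ) ≤ (k2:ℝ) := by exact_mod_cast hk2
      linarith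

/-- The set of all affine (real) roots. -/
def affRoots (R : RootSystemData V) : Set (AffSpace V) :=
  {x | ∃ μ ∈ R.Δ, ∃ k : ℤ, x = affIota μ + (k : ℝ) • affDelta V}

lemma inner_self_pos_of_mem (R : RootSystemData V) {α : V} (hα : α ∈ R.Δ) :
    (0:ℝ) < ⟪α, α⟫ := by
  have h0 : α ≠ 0 := fun h => R.zero_not_mem (h ▸ hα)
  rw [real_inner_self_eq_norm_sq]
  exact pow_pos (norm_pos_iff.mpr h0) 2

lemma affForm_delta_left (y : AffSpace V) : affForm (affDelta V) y = y.2.2 := by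
  simp [affForm, affDelta]

lemma reflect_fixes_delta (R : RootSystemData V) (θ : V) {β : AffSpace V}
    (hβ : β ∈ affSimpleRoots R θ) : affReflect β (affDelta V) = affDelta V := by
  have h0 : affForm (affDelta V) β = 0 := by
    rcases hβ with ⟨α, _, rfl⟩ | hβ0
    · simp [affForm_delta_left]
    · rw [Set.mem_singleton_iff] at hβ0
      rw [hβ0, affForm_delta_left]
      simp
  rw [affReflect_apply, h0]
  simp

lemma reflect_maps_roots (R : RootSystemData V) {θ : V} (hθ : R.IsHighestRoot θ)
    {β : AffSpace V} (hβ : β ∈ affSimpleRoots R θ) :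
    ∀ x ∈ affRoots R, affReflect β x ∈ affRoots R := by
  rintro x ⟨μ, hμ, k, rfl⟩
  rcases hβ with ⟨α, hα, rfl⟩ | hβ0
  · have hαΔ : α ∈ R.Δ := R.Δpos_subset (R.Pi_subset hα)
    have h1 : affForm (affIota μ + (k:ℝ) • affDelta V) (affIota α) = ⟪μ, α⟫ := by
      simp [affForm, affIota, affDelta]
    have h2 : affForm (affIota α) (affIota α) = ⟪α, α⟫ := by
      simp [affForm, affIota]
    refine ⟨μ - (2 * ⟪μ, α⟫ / ⟪α, α⟫) • α, R.reflect_mem hαΔ hμ, k, ?_⟩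
    rw [affReflect_apply, h1, h2]
    refine Prod.ext ?_ (Prod.ext ?_ ?_) <;>
      simp [affIota, affDelta]
  · rw [Set.mem_singleton_iff] at hβ0
    subst hβ0
    have hθΔ : θ ∈ R.Δ := R.Δpos_subset hθ.1
    obtain ⟨m, hm⟩ := R.crystallographic hθΔ hμ
    have hθθ : (0:ℝ) < ⟪θ, θ⟫ := inner_self_pos_of_mem R hθΔ
    have h1 : affForm (affIota μ + (k:ℝ) • affDelta V) (affDelta V - affIota θ) =
        -⟪μ, θ⟫ := by
      simp [affForm, affIota, affDelta, inner_sub_right]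
    have h2 : affForm (affDelta V - affIota θ) (affDelta V - affIota θ) = ⟪θ, θ⟫ := by
      simp [affForm, affIota, affDelta, inner_sub_left, inner_sub_right]
    have hquot : 2 * ⟪μ, θ⟫ / ⟪θ, θ⟫ = (m : ℝ) := by
      field_simp
      linarith [hm]
    refine ⟨μ - (2 * ⟪μ, θ⟫ / ⟪θ, θ⟫) • θ, R.reflect_mem hθΔ hμ, k + m, ?_⟩
    rw [affReflect_apply, h1, h2]
    have ht : 2 * -⟪μ, θ⟫ / ⟪θ, θ⟫ = -(m : ℝ) := by
      rw [← hquot]; ring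
    rw [ht, hquot]
    refine Prod.ext ?_ (Prod.ext ?_ ?_)
    · simp only [Prod.fst_sub, Prod.fst_add, Prod.smul_fst, affIota_fst, affDelta_fst,
        smul_zero, add_zero, Prod.snd_sub, Prod.snd_add, Prod.smul_snd]
      module
    · simp only [Prod.fst_sub, Prod.fst_add, Prod.smul_fst, Prod.snd_sub, Prod.snd_add,
        Prod.smul_snd, affIota_snd1, affDelta_snd1, affIota_snd2, affDelta_snd2, smul_eq_mul]
      push_cast
      ring
    · simp only [Prod.fst_sub, Prod.fst_add, Prod.smul_fst, Prod.snd_sub, Prod.snd_add,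
        Prod.smul_snd, affIota_snd2, affDelta_snd2, smul_eq_mul]
      ring

lemma weyl_props (R : RootSystemData V) {θ : V} (hθ : R.IsHighestRoot θ)
    {w : AffSpace V ≃ₗ[ℝ] AffSpace V} (hw : w ∈ affWeylGroup R θ) :
    w (affDelta V) = affDelta V ∧ ∀ x, x ∈ affRoots R ↔ w x ∈ affRoots R := by
  refine Subgroup.closure_induction
    (p := fun g _ => g (affDelta V) = affDelta V ∧ ∀ x, x ∈ affRoots R ↔ g x ∈ affRoots R)
    ?_ ?_ ?_ ?_ hw
  · rintro s ⟨β, hβ, rfl⟩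
    refine ⟨reflect_fixes_delta R θ hβ, fun x => ⟨fun hx => reflect_maps_roots R hθ hβ x hx,
      fun hx => ?_⟩⟩
    have := reflect_maps_roots R hθ hβ _ hx
    rwa [show (affReflect β) ((affReflect β) x) = x from affReflectMap_involutive β x] at this
  · exact ⟨rfl, fun x => Iff.rfl⟩
  · rintro a b _ _ ⟨ha1, ha2⟩ ⟨hb1, hb2⟩
    refine ⟨?_, fun x => ?_⟩
    · show a (b (affDelta V)) = affDelta V
      rw [hb1, ha1]
    · show x ∈ affRoots R ↔ a (b x) ∈ affRoots R
      rw [hb2 x, ha2 (b x)]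
  · rintro a _ ⟨ha1, ha2⟩
    refine ⟨?_, fun x => ?_⟩
    · show a.symm (affDelta V) = affDelta V
      conv_lhs => rw [← ha1, LinearEquiv.symm_apply_apply]
    · show x ∈ affRoots R ↔ a.symm x ∈ affRoots R
      conv_lhs => rw [← LinearEquiv.apply_symm_apply a x]
      exact (ha2 (a.symm x)).symm

lemma affRoots_pos_or_neg (R : RootSystemData V) {x : AffSpace V} (hx : x ∈ affRoots R) :
    x ∈ affPosRoots R ∨ -x ∈ affPosRoots R := by
  obtain ⟨μ, hμ, k, rfl⟩ := hx
  rcases lt_trichotomy k 0 with hk | hk | hk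
  · right
    refine (mem_affPosRoots_iff R _).2 (Or.inr ⟨-μ, R.neg_mem hμ, (-k).toNat, ?_, ?_⟩)
    · omega
    · have hcast : (((-k).toNat : ℕ) : ℝ) = -(k : ℝ) := by
        rw [← Int.cast_natCast, Int.toNat_of_nonneg (show (0:ℤ) ≤ -k by omega)]
        push_cast
        ring
      rw [hcast]
      simp [affIota, affDelta, Prod.ext_iff]
  · subst hk
    rcases R.pos_or_neg hμ with hc | hc
    · left
      exact (mem_affPosRoots_iff R _).2 (Or.inl ⟨μ, hc, by simp⟩)
    · right
      exact (mem_affPosRoots_iff R _).2 (Or.inl ⟨-μ, hc, by simp [affIota, Prod.ext_iff]⟩)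
  · left
    refine (mem_affPosRoots_iff R _).2 (Or.inr ⟨μ, hμ, k.toNat, ?_, ?_⟩)
    · omega
    · have hcast : ((k.toNat : ℕ) : ℝ) = (k : ℝ) := by
        rw [← Int.cast_natCast, Int.toNat_of_nonneg (show (0:ℤ) ≤ k by omega)]
      rw [hcast]

end AuxStmt8

open AuxStmt8 in
/-- Theorem 3.2.  Suppose `w ∈ Ŵ` is dominant and let `c` be the
first-layer ideal of `w`, i.e. the ad-nilpotent ideal with root set
`I = {γ ∈ Δ⁺ : w(δ - γ) ∈ -Δ̂⁺}`.  If `ν ∈ Π` and `w(ν) ∈ Π̂`, then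
`g_{-ν} ⊆ n_g(c)`. -/
theorem negSimple_in_normalizer_of_firstLayer
    {V : Type*} [NormedAddCommGroup V] [InnerProductSpace ℝ V] [FiniteDimensional ℝ V]
    (R : RootSystemData V) (θ : V) (hθ : R.IsHighestRoot θ)
    (w : AffSpace V ≃ₗ[ℝ] AffSpace V) (hw : w ∈ affWeylGroup R θ)
    (hdom : IsDominant R w)
    (I : Finset V)
    (hfl : ∀ γ : V, γ ∈ I ↔ γ ∈ R.Δpos ∧ -(w (affDelta V - affIota γ)) ∈ affPosRoots R)
    (ν : V) (hν : ν ∈ R.Pi) (hsimple : w (affIota ν) ∈ affSimpleRoots R θ) :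
    R.NegSimpleRootInNormalizer I ν := by
  have hδfix := (AuxStmt8.weyl_props R hθ hw).1
  have hroots := (AuxStmt8.weyl_props R hθ hw).2
  constructor
  · intro hmem
    have h2 := ((hfl ν).1 hmem).2
    have hrw : w (affDelta V - affIota ν) = affDelta V - w (affIota ν) := by
      rw [map_sub, hδfix]
    rcases hsimple with ⟨α, hα, hval⟩ | hval
    · have hx : w (affDelta V - affIota ν) ∈ affPosRoots R := by
        rw [hrw, ← hval]
        refine (AuxStmt8.mem_affPosRoots_iff R _).2 (Or.inr
          ⟨-α, R.neg_mem (R.Δpos_subset (R.Pi_subset hα)), 1, le_refl 1, ?_⟩)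
        simp [affIota, affDelta, Prod.ext_iff]
      exact (AuxStmt8.not_both_pos R hx h2).elim
    · rw [Set.mem_singleton_iff] at hval
      have hx : w (affDelta V - affIota ν) ∈ affPosRoots R := by
        rw [hrw, hval]
        refine (AuxStmt8.mem_affPosRoots_iff R _).2 (Or.inl ⟨θ, hθ.1, ?_⟩)
        simp [affIota, affDelta, Prod.ext_iff]
      exact (AuxStmt8.not_both_pos R hx h2).elim
  · intro γ hγI hroot
    have hγ := (hfl γ).1 hγI
    have hpos : γ - ν ∈ R.Δpos := by
      rcases R.pos_or_neg hroot with h | h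
      · exact h
      · exfalso
        have hng : -(γ - ν) = ν - γ := by abel
        rw [hng] at h
        rcases AuxStmt8.NN_add_NN_eq_simple R hν (AuxStmt8.isNN_of_pos R hγ.1)
          (AuxStmt8.isNN_of_pos R h) (by abel) with h0 | h0
        · exact R.zero_not_mem (h0 ▸ R.Δpos_subset hγ.1)
        · have : γ - ν = 0 := by
            rw [sub_eq_zero] at h0 ⊢
            exact h0.symm
          exact R.zero_not_mem (this ▸ hroot)
    refine (hfl _).2 ⟨hpos, ?_⟩
    set y := w (affDelta V - affIota (γ - ν)) with hy
    have hyroot : y ∈ affRoots R := by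
      rw [hy, ← hroots]
      refine ⟨-(γ - ν), R.neg_mem hroot, (1:ℤ), ?_⟩
      simp [affIota, affDelta, Prod.ext_iff]
    rcases AuxStmt8.affRoots_pos_or_neg R hyroot with hyp | hyn
    · exfalso
      have hq : -(w (affDelta V - affIota γ)) ∈ affPosRoots R := hγ.2
      have key : y + (-(w (affDelta V - affIota γ))) = w (affIota ν) := by
        rw [hy, ← map_neg, ← map_add]
        congr 1
        rw [AuxStmt8.affIota_sub]
        abel
      rcases hsimple with ⟨α, hα, hval⟩ | hval
      · exact AuxStmt8.no_sum_simple_iota R hα hyp hq (by rw [key, ← hval])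
      · rw [Set.mem_singleton_iff] at hval
        exact AuxStmt8.no_sum_alpha0 R hθ hyp hq (by rw [key, hval])
    · exact hyn

end
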